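/- For all integers j ≥ 1 and k ≥ 1: ν_3(c(2j−1,k)) ≥ 2j+δ_{k,1}+⌊(9k−10)/2⌋ and ν_3(c(2j,k)) ≥ 2j+2+δ_{k,1}+⌊(9k−10)/2⌋, where δ_{k,1} equals 1 if k = 1 and 0 otherwise. Equivalently, 3 raised to each of these exponents (which are nonnegative for all k ≥ 1) divides c(2j−1,k) and c(2j,k) respectively. -/

import Mathlib

/-- The matrix `m(i,j)` of Hirschhorn: `m(i,j) = 0` whenever `i = 0` or `j = 0`
(corresponding to nonpositive indices), `m(1,1) = 9`, `m(2,1) = 6`, `m(3,1) = 1`,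
`m(i,1) = 0` for `i ≥ 4`, and for `j ≥ 2`,
`m(i,j) = 27·m(i-1,j-1) + 9·m(i-2,j-1) + m(i-3,j-1)`
(truncated subtraction correctly yields the prescribed value `0` at nonpositive
first arguments). -/
def mCoef : ℕ → ℕ → ℤ
  | _, 0 => 0
  | 0, _ => 0
  | 1, 1 => 9
  | 2, 1 => 6
  | 3, 1 => 1
  | _ + 4, 1 => 0
  | i, j + 2 => 27 * mCoef (i - 1) (j + 1) + 9 * mCoef (i - 2) (j + 1) + mCoef (i - 3) (j + 1)

/-- The matrix `c(j,k)`: `c(1,1) = 9`, `c(1,k) = 0` for `k ≥ 2`, and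
`c(j+1,k) = ∑_{i≥1} c(j,i)·m(4i,i+k)` if `j` is odd, while
`c(j+1,k) = ∑_{i≥1} c(j,i)·m(4i+2,i+k)` if `j` is even.  All terms with `i > 3k + 3`
vanish (since `m(i',j') = 0` unless `⌊(i'+2)/3⌋ ≤ j'`), so the sums may be truncated
there. -/
def cCoef : ℕ → ℕ → ℤ
  | 1, 1 => 9
  | j + 2, k =>
      if (j + 1) % 2 = 1 then
        ∑ i ∈ Finset.Icc 1 (3 * k + 3), cCoef (j + 1) i * mCoef (4 * i) (i + k)
      else
        ∑ i ∈ Finset.Icc 1 (3 * k + 3), cCoef (j + 1) i * mCoef (4 * i + 2) (i + k)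
  | _, _ => 0

/-- exponent -/
def eExp (k : ℕ) : ℕ := if k = 1 then 0 else (9 * k - 10) / 2

lemma key {a b c d : ℕ} {x : ℤ} (h : (3:ℤ)^c ∣ 3^d * x) (hle : a + d ≤ b + c) :
    (3:ℤ)^a ∣ 3^b * x := by
  obtain ⟨q, hq⟩ := h
  have h3 : (3:ℤ)^d ≠ 0 := by positivity
  have h1 : (3:ℤ)^d * (3^b * x) = 3^(b+c) * q := by
    rw [mul_left_comm, hq, ← mul_assoc, ← pow_add]
  refine (mul_dvd_mul_iff_left h3).mp ?_
  rw [← pow_add, h1]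
  exact Dvd.dvd.mul_right (pow_dvd_pow 3 (by omega)) q

lemma key' {a c d : ℕ} {x : ℤ} (h : (3:ℤ)^c ∣ 3^d * x) (hle : a + d ≤ c) :
    (3:ℤ)^a ∣ x := by
  have h2 : (3:ℤ)^a ∣ 3^0 * x := key h (by omega)
  simpa using h2

lemma mCoef_supp : ∀ j i, i < j → mCoef i j = 0 := by
  intro j
  induction j with
  | zero => intro i h; omega
  | succ j ih =>
    intro i hi
    cases i with
    | zero => cases j <;> simp [mCoef]
    | succ i =>
      cases j with
      | zero => omega
      | succ j =>
        have : mCoef (i+1) (j+2) = 27 * mCoef i (j+1) + 9 * mCoef (i-1) (j+1)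
            + mCoef (i-2) (j+1) := by simp [mCoef]
        rw [this, ih i (by omega), ih (i-1) (by omega), ih (i-2) (by omega)]
        ring

lemma mCoef_bound : ∀ j i, (3:ℤ)^(3*j+2) ∣ 3^(3*(i-(j+1))/2) * mCoef i (j+1) := by
  intro j
  induction j with
  | zero =>
    intro i
    match i with
    | 0 => simp [mCoef]
    | 1 => norm_num [mCoef]
    | 2 => norm_num [mCoef]
    | 3 => norm_num [mCoef]
    | (i+4) => simp [mCoef]
  | succ j ih =>
    intro i
    cases i with
    | zero => simp [mCoef]
    | succ i =>
      have hrec : mCoef (i+1) (j+2) = 27 * mCoef i (j+1) + 9 * mCoef (i-1) (j+1)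
          + mCoef (i-2) (j+1) := by simp [mCoef]
      rw [hrec]
      have hE : (i+1) - (j+2) = i - (j+1) := by omega
      rw [hE]
      set E := 3*(i-(j+1))/2 with hEdef
      have expand : (3:ℤ)^E * (27 * mCoef i (j+1) + 9 * mCoef (i-1) (j+1) + mCoef (i-2) (j+1))
          = 3^(E+3) * mCoef i (j+1) + 3^(E+2) * mCoef (i-1) (j+1) + 3^E * mCoef (i-2) (j+1) := by
        rw [pow_add, pow_add]; ring_nf
      rw [expand]
      refine dvd_add (dvd_add ?_ ?_) ?_
      · exact key (ih i) (by omega)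
      · by_cases hij : i ≤ j + 1
        · rw [mCoef_supp (j+1) (i-1) (by omega), mul_zero]; exact dvd_zero _
        · refine key (ih (i-1)) ?_
          have : (i-1) - (j+1) = i - (j+2) := by omega
          rw [this]; omega
      · by_cases hij : i ≤ j + 2
        · rw [mCoef_supp (j+1) (i-2) (by omega), mul_zero]; exact dvd_zero _
        · refine key (ih (i-2)) ?_
          have : (i-2) - (j+1) = i - (j+3) := by omega
          rw [this]; omega

lemma L1 (i k : ℕ) (hi : 1 ≤ i) (hk : 1 ≤ k) :
    (3:ℤ)^(2 + eExp k) ∣ 3^(eExp i) * mCoef (4*i) (i+k) := by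
  by_cases h : 3*i < k
  · rw [mCoef_supp (i+k) (4*i) (by omega), mul_zero]; exact dvd_zero _
  · have hM := mCoef_bound (i+k-1) (4*i)
    rw [show i+k-1+1 = i+k by omega] at hM
    refine key hM ?_
    unfold eExp; split_ifs <;> omega

lemma L2 (i k : ℕ) (hi : 1 ≤ i) (hk : 1 ≤ k) :
    (3:ℤ)^(eExp k) ∣ 3^(eExp i) * mCoef (4*i+2) (i+k) := by
  by_cases hk1 : k = 1
  · subst hk1; simp [eExp]
  by_cases h : 3*i + 2 < k
  · rw [mCoef_supp (i+k) (4*i+2) (by omega), mul_zero]; exact dvd_zero _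
  · have hM := mCoef_bound (i+k-1) (4*i+2)
    rw [show i+k-1+1 = i+k by omega] at hM
    refine key hM ?_
    unfold eExp; split_ifs <;> omega

lemma row1 (k : ℕ) (hk : 1 ≤ k) : (3:ℤ)^(2 + eExp k) ∣ cCoef 1 k := by
  match k, hk with
  | 1, _ => show (3:ℤ)^(2 + eExp 1) ∣ 9; norm_num [eExp]
  | (k+2), _ => show (3:ℤ)^_ ∣ 0; exact dvd_zero _

lemma stepOE (j : ℕ) (h : ∀ i, 1 ≤ i → (3:ℤ)^(2*j+2+eExp i) ∣ cCoef (2*j+1) i) :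
    ∀ k, 1 ≤ k → (3:ℤ)^(2*j+4+eExp k) ∣ cCoef (2*j+2) k := by
  intro k hk
  have hrec : cCoef (2*j+2) k = ∑ i ∈ Finset.Icc 1 (3 * k + 3),
      cCoef (2*j+1) i * mCoef (4 * i) (i + k) := by
    rw [cCoef]; rw [if_pos (by omega)]
  rw [hrec]
  refine Finset.dvd_sum ?_
  intro i hi
  rw [Finset.mem_Icc] at hi
  have hc := h i hi.1
  have hm := L1 i k hi.1 hk
  have hmul := mul_dvd_mul hc hm
  rw [← pow_add, mul_left_comm] at hmul
  exact key' hmul (by omega)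

lemma stepEO (j : ℕ) (h : ∀ i, 1 ≤ i → (3:ℤ)^(2*j+4+eExp i) ∣ cCoef (2*j+2) i) :
    ∀ k, 1 ≤ k → (3:ℤ)^(2*j+4+eExp k) ∣ cCoef (2*j+3) k := by
  intro k hk
  have hrec : cCoef (2*j+3) k = ∑ i ∈ Finset.Icc 1 (3 * k + 3),
      cCoef (2*j+2) i * mCoef (4 * i + 2) (i + k) := by
    rw [show 2*j+3 = (2*j+1)+2 by ring, cCoef]
    rw [if_neg (by omega), show 2*j+1+1 = 2*j+2 by ring]
  rw [hrec]
  refine Finset.dvd_sum ?_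
  intro i hi
  rw [Finset.mem_Icc] at hi
  have hc := h i hi.1
  have hm := L2 i k hi.1 hk
  have hmul := mul_dvd_mul hc hm
  rw [← pow_add, mul_left_comm] at hmul
  exact key' hmul (by omega)

lemma both (j : ℕ) : (∀ k, 1 ≤ k → (3:ℤ)^(2*j+2+eExp k) ∣ cCoef (2*j+1) k) ∧
    (∀ k, 1 ≤ k → (3:ℤ)^(2*j+4+eExp k) ∣ cCoef (2*j+2) k) := by
  induction j with
  | zero =>
    have h1 : ∀ k, 1 ≤ k → (3:ℤ)^(2*0+2+eExp k) ∣ cCoef (2*0+1) k := by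
      intro k hk; simpa using row1 k hk
    exact ⟨h1, stepOE 0 h1⟩
  | succ j ih =>
    have h1 : ∀ k, 1 ≤ k → (3:ℤ)^(2*(j+1)+2+eExp k) ∣ cCoef (2*(j+1)+1) k := by
      intro k hk
      have := stepEO j ih.2 k hk
      convert this using 2 <;> omega
    refine ⟨h1, ?_⟩
    intro k hk
    have := stepOE (j+1) h1 k hk
    convert this using 2


/-- `ν₃(c(2j-1,k)) ≥ 2j + δ_{k,1} + ⌊(9k-10)/2⌋` and
`ν₃(c(2j,k)) ≥ 2j + 2 + δ_{k,1} + ⌊(9k-10)/2⌋` for `j, k ≥ 1`, stated as divisibility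
by the corresponding powers of 3.  Here `δ_{k,1} + ⌊(9k-10)/2⌋` equals `0` when `k = 1`
(since `δ_{1,1} = 1` and `⌊-1/2⌋ = -1`) and equals `(9k-10)/2` in natural-number
division when `k ≥ 2`, so both total exponents are nonnegative. -/
theorem cCoef_three_adic_bound (j k : ℕ) (hj : 1 ≤ j) (hk : 1 ≤ k) :
    (3 : ℤ) ^ (2 * j + (if k = 1 then 0 else (9 * k - 10) / 2)) ∣ cCoef (2 * j - 1) k ∧
    (3 : ℤ) ^ (2 * j + 2 + (if k = 1 then 0 else (9 * k - 10) / 2)) ∣ cCoef (2 * j) k := by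
  obtain ⟨j, rfl⟩ : ∃ j', j = j' + 1 := ⟨j - 1, by omega⟩
  obtain ⟨h1, h2⟩ := both j
  constructor
  · have := h1 k hk
    rw [show 2*(j+1)-1 = 2*j+1 by omega, show 2*(j+1) + (if k = 1 then 0 else (9*k-10)/2)
      = 2*j+2+eExp k by unfold eExp; split_ifs <;> omega]
    exact this
  · have := h2 k hk
    rw [show 2*(j+1) + 2 + (if k = 1 then 0 else (9*k-10)/2)
      = 2*j+4+eExp k by unfold eExp; split_ifs <;> omega,
      show 2*(j+1) = 2*j+2 by omega]
    exact this
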